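/- Let A be a continuous dcpo equipped with the Scott topology, and define the relation R on A × A by R = {(x,y) | there exist v, w ∈ A with v ≪ x, w ≪ y, and the pair {v,w} has no upper bound in A}. Then R is open in the product topology and symmetric, and its complement ∼ = (A × A) \ R is the least closed tolerance on A: ∼ is reflexive, symmetric, and closed in the product topology, and every reflexive relation T ⊆ A × A that is closed in the product topology contains ∼. -/

import Mathlib

/-- `x` is way below `y`: for every nonempty directed set `S` possessing a least
upper bound `b` with `y ≤ b`, there is `s ∈ S` with `x ≤ s`. -/
def wayBelow {α : Type*} [Preorder α] (x y : α) : Prop :=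
  ∀ S : Set α, S.Nonempty → DirectedOn (· ≤ ·) S → ∀ b : α, IsLUB S b → y ≤ b → ∃ s ∈ S, x ≤ s

/-- A directed complete partial order: every directed subset (including `∅`,
so there is a least element) has a least upper bound. -/
def IsDcpo (α : Type*) [Preorder α] : Prop :=
  ∀ S : Set α, DirectedOn (· ≤ ·) S → ∃ b, IsLUB S b

/-- Bounded completeness: every subset with an upper bound has a least upper bound. -/
def BoundedComplete (α : Type*) [Preorder α] : Prop :=
  ∀ S : Set α, (∃ b, ∀ s ∈ S, s ≤ b) → ∃ m, IsLUB S m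

/-- Algebraicity: for every element `a`, the set of compact elements below `a` is
(nonempty and) directed with least upper bound `a`. -/
def IsAlgebraicDom (α : Type*) [Preorder α] : Prop :=
  ∀ a : α, ({k : α | wayBelow k k ∧ k ≤ a}).Nonempty ∧
    DirectedOn (· ≤ ·) {k : α | wayBelow k k ∧ k ≤ a} ∧
    IsLUB {k : α | wayBelow k k ∧ k ≤ a} a

/-- `K` is a basis of a continuous dcpo: for every `a`, the set of elements of `K`
way below `a` is (nonempty and) directed with least upper bound `a`. -/
def IsDomBasis {α : Type*} [Preorder α] (K : Set α) : Prop :=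
  ∀ a : α, ({k ∈ K | wayBelow k a}).Nonempty ∧
    DirectedOn (· ≤ ·) {k ∈ K | wayBelow k a} ∧
    IsLUB {k ∈ K | wayBelow k a} a

/-- Scott open sets: upper sets inaccessible by least upper bounds of nonempty
directed sets. -/
def ScottOpen {α : Type*} [Preorder α] (U : Set α) : Prop :=
  (∀ x ∈ U, ∀ y, x ≤ y → y ∈ U) ∧
  ∀ S : Set α, S.Nonempty → DirectedOn (· ≤ ·) S → ∀ b : α, IsLUB S b → b ∈ U → ∃ s ∈ S, s ∈ U

/-- Interior in the Scott topology: the largest Scott open subset. -/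
def scottInt {α : Type*} [Preorder α] (B : Set α) : Set α :=
  ⋃₀ {U : Set α | ScottOpen U ∧ U ⊆ B}

/-- Negative information about `x`: the elements inconsistent with `x`
(the pair has no upper bound). -/
def negSet {α : Type*} [Preorder α] (x : α) : Set α :=
  {y | ¬∃ b, x ≤ b ∧ y ≤ b}

/-- `J_x = {y | x ∈ Int (I_y)}`, the continuous approximation of `I_x = negSet x`. -/
def jSet {α : Type*} [Preorder α] (x : α) : Set α :=
  {y | x ∈ scottInt (negSet y)}

/-- The set of total (maximal) elements. -/
def TotalElems (α : Type*) [Preorder α] : Set α := {x | ∀ y, x ≤ y → y = x}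

/-- Openness in the product of the Scott topologies on `α × α`. -/
def ProdScottOpen {α : Type*} [Preorder α] (W : Set (α × α)) : Prop :=
  ∀ p ∈ W, ∃ U V : Set α, ScottOpen U ∧ ScottOpen V ∧
    p.1 ∈ U ∧ p.2 ∈ V ∧ U ×ˢ V ⊆ W

section Aux
variable {α : Type*} [PartialOrder α]

lemma wayBelow_le {x y : α} (h : wayBelow x y) : x ≤ y := by
  obtain ⟨s, hs, hxs⟩ := h {y} ⟨y, rfl⟩ (directedOn_singleton y) y isLUB_singleton le_rfl
  rwa [Set.mem_singleton_iff.mp hs] at hxs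

lemma le_wayBelow {x y z : α} (h : x ≤ y) (hw : wayBelow y z) : wayBelow x z :=
  fun S hS hdir b hb hzb => by
    obtain ⟨s, hs, hys⟩ := hw S hS hdir b hb hzb
    exact ⟨s, hs, h.trans hys⟩

lemma wayBelow_le' {x y z : α} (hw : wayBelow x y) (h : y ≤ z) : wayBelow x z :=
  fun S hS hdir b hb hzb => hw S hS hdir b hb (h.trans hzb)

/-- Interpolation in a continuous dcpo. -/
lemma interp {K : Set α} (hK : IsDomBasis K) {v b : α} (hvb : wayBelow v b) :
    ∃ k ∈ K, wayBelow v k ∧ wayBelow k b := by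
  obtain ⟨hne, hdir, hlub⟩ := hK b
  set D : Set α := {k ∈ K | ∃ k' ∈ K, wayBelow k k' ∧ wayBelow k' b} with hD
  have hDne : D.Nonempty := by
    obtain ⟨k', hk'K, hk'b⟩ := hne
    obtain ⟨m, hmK, hmk'⟩ := (hK k').1
    exact ⟨m, hmK, k', hk'K, hmk', hk'b⟩
  have hDdir : DirectedOn (· ≤ ·) D := by
    rintro x1 ⟨hx1K, k1', hk1K, hx1, hk1b⟩ x2 ⟨hx2K, k2', hk2K, hx2, hk2b⟩
    obtain ⟨k3, ⟨hk3K, hk3b⟩, h13, h23⟩ := hdir k1' ⟨hk1K, hk1b⟩ k2' ⟨hk2K, hk2b⟩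
    obtain ⟨hne3, hdir3, hlub3⟩ := hK k3
    obtain ⟨m1, hm1, hxm1⟩ := (wayBelow_le' hx1 h13) _ hne3 hdir3 k3 hlub3 le_rfl
    obtain ⟨m2, hm2, hxm2⟩ := (wayBelow_le' hx2 h23) _ hne3 hdir3 k3 hlub3 le_rfl
    obtain ⟨m, ⟨hmK, hmk3⟩, hm1m, hm2m⟩ := hdir3 m1 hm1 m2 hm2
    exact ⟨m, ⟨hmK, k3, hk3K, hmk3, hk3b⟩, hxm1.trans hm1m, hxm2.trans hm2m⟩
  have hDlub : IsLUB D b := by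
    constructor
    · rintro x ⟨hxK, k', hk'K, hx, hk'b⟩
      exact (wayBelow_le hx).trans (wayBelow_le hk'b)
    · intro u hu
      apply hlub.2
      rintro k' ⟨hk'K, hk'b⟩
      apply (hK k').2.2.2
      rintro m ⟨hmK, hmk'⟩
      exact hu ⟨hmK, k', hk'K, hmk', hk'b⟩
  obtain ⟨d, ⟨hdK, d', hd'K, hdd', hd'b⟩, hvd⟩ := hvb D hDne hDdir b hDlub le_rfl
  exact ⟨d', hd'K, le_wayBelow hvd hdd', hd'b⟩

/-- The basic Scott-open neighbourhoods. -/
lemma uOpen {K : Set α} (hK : IsDomBasis K) (v : α) :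
    ScottOpen {a : α | ∃ k ∈ K, v ≤ k ∧ wayBelow k a} := by
  constructor
  · rintro x ⟨k, hkK, hvk, hkx⟩ y hxy
    exact ⟨k, hkK, hvk, wayBelow_le' hkx hxy⟩
  · rintro S hSne hSdir b hb ⟨k, hkK, hvk, hkb⟩
    obtain ⟨d', hd'K, hkd', hd'b⟩ := interp hK hkb
    obtain ⟨s, hs, hds⟩ := hd'b S hSne hSdir b hb le_rfl
    exact ⟨s, hs, k, hkK, hvk, wayBelow_le' hkd' hds⟩

lemma mem_u {K : Set α} (hK : IsDomBasis K) {v x : α} (h : wayBelow v x) :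
    x ∈ {a : α | ∃ k ∈ K, v ≤ k ∧ wayBelow k a} := by
  obtain ⟨hne, hdir, hlub⟩ := hK x
  obtain ⟨k, ⟨hkK, hkx⟩, hvk⟩ := h _ hne hdir x hlub le_rfl
  exact ⟨k, hkK, hvk, hkx⟩

lemma u_wayBelow {K : Set α} {v a : α}
    (h : a ∈ {a : α | ∃ k ∈ K, v ≤ k ∧ wayBelow k a}) : wayBelow v a := by
  obtain ⟨k, _, hvk, hka⟩ := h
  exact le_wayBelow hvk hka

end Aux

/-- in a continuous dcpo, the relation
`R = {(x,y) | ∃ v ≪ x, w ≪ y with {v,w} unbounded}` is open in the product of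
Scott topologies and symmetric, and its complement `∼` is the least closed
tolerance: reflexive, symmetric, closed, and contained in every reflexive
relation that is closed in the product topology. -/
theorem stmt14 {α : Type*} [PartialOrder α]
    (hd : IsDcpo α) (K : Set α) (hK : IsDomBasis K)
    (R : Set (α × α))
    (hR : R = {p : α × α | ∃ v w : α, wayBelow v p.1 ∧ wayBelow w p.2 ∧
      ¬∃ b : α, v ≤ b ∧ w ≤ b}) :
    ProdScottOpen R ∧
    (∀ x y : α, (x, y) ∈ R → (y, x) ∈ R) ∧
    (∀ x : α, (x, x) ∈ Rᶜ) ∧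
    (∀ x y : α, (x, y) ∈ Rᶜ → (y, x) ∈ Rᶜ) ∧
    ProdScottOpen (Rᶜ)ᶜ ∧
    (∀ T : Set (α × α), (∀ x : α, (x, x) ∈ T) → ProdScottOpen Tᶜ → Rᶜ ⊆ T) := by
  subst hR
  have symm : ∀ x y : α,
      (x, y) ∈ {p : α × α | ∃ v w : α, wayBelow v p.1 ∧ wayBelow w p.2 ∧
        ¬∃ b : α, v ≤ b ∧ w ≤ b} →
      (y, x) ∈ {p : α × α | ∃ v w : α, wayBelow v p.1 ∧ wayBelow w p.2 ∧
        ¬∃ b : α, v ≤ b ∧ w ≤ b} := by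
    rintro x y ⟨v, w, hv, hw, hb⟩
    exact ⟨w, v, hw, hv, fun ⟨b, h1, h2⟩ => hb ⟨b, h2, h1⟩⟩
  have hopen : ProdScottOpen {p : α × α | ∃ v w : α, wayBelow v p.1 ∧ wayBelow w p.2 ∧
      ¬∃ b : α, v ≤ b ∧ w ≤ b} := by
    rintro ⟨x, y⟩ ⟨v, w, hv, hw, hb⟩
    refine ⟨{a : α | ∃ k ∈ K, v ≤ k ∧ wayBelow k a},
      {a : α | ∃ k ∈ K, w ≤ k ∧ wayBelow k a},
      uOpen hK v, uOpen hK w, mem_u hK hv, mem_u hK hw, ?_⟩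
    rintro ⟨a, b⟩ ⟨ha, hb'⟩
    exact ⟨v, w, u_wayBelow ha, u_wayBelow hb', hb⟩
  refine ⟨hopen, symm, ?_, fun x y h hy => h (symm y x hy),
    by simpa [compl_compl] using hopen, ?_⟩
  · rintro x ⟨v, w, hv, hw, hb⟩
    exact hb ⟨x, wayBelow_le hv, wayBelow_le hw⟩
  · intro T hTrefl hTopen p hp
    by_contra hpT
    obtain ⟨U, V, hU, hV, hp1, hp2, hUV⟩ := hTopen p hpT
    obtain ⟨hne1, hdir1, hlub1⟩ := hK p.1
    obtain ⟨s1, ⟨hs1K, hs1⟩, hs1U⟩ := hU.2 _ hne1 hdir1 p.1 hlub1 hp1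
    obtain ⟨hne2, hdir2, hlub2⟩ := hK p.2
    obtain ⟨s2, ⟨hs2K, hs2⟩, hs2V⟩ := hV.2 _ hne2 hdir2 p.2 hlub2 hp2
    refine hp ⟨s1, s2, hs1, hs2, ?_⟩
    rintro ⟨b, hb1, hb2⟩
    exact hUV ⟨hU.1 s1 hs1U b hb1, hV.1 s2 hs2V b hb2⟩ (hTrefl b)
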